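/- Let E₁(t), E₂(t) ∈ K[[t]] be determined by the conditions: E₁'(t) = −3(F(t)/(t−1) − F(t)^σ · d(t^σ)/dt · p^{−1}/(t^σ−1)) with E₁(0) = 0, and E₂'(t) = −E₁(t)·q'/q − 3F(t)^σ · τ^{(σ)}(t) · p^{−1} d(t^σ)/dt /(t^σ−1) with E₂(0) = −9·ln₂^{(p)}(−ν), where ν = (−1+√−3)/2. Then E₁ and E₂ are well-defined: the first ODE has a unique power-series solution with E₁(0)=0 lying in K[[t]], E₁ ∈ tK[[t]], and given E₁ ∈ tK[[t]] the right side of the second equation has no dt/t-residue at t=0, so E₂ is determined in K[[t]] up to the prescribed constant term. -/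

import Mathlib

/-!
**STATEMENT 19** (well-definedness of `E₁, E₂` in Theorem `ell-thm`).  Let `K` be the
fraction field of `W(𝔽̄_p)` (abstractly: a field of characteristic `0` containing
`s = √-3`), `c ∈ 1 + pW`, `σ(t) = c·t^p`, `F(t) = (1/(2√-3))·₂F₁(1/3,2/3;1;t)`,
`q ∈ tW[[t]]` the Tate period (`q = t·u` with `u(0) = 1/27`), and
`τ^{(σ)} ∈ W[[t]]`.  Then:
 * the ODE `E₁' = -3(F/(t-1) - F^σ·p⁻¹(t^σ)'/(t^σ-1))` has a unique power-series
   solution with `E₁(0) = 0` (in particular `E₁ ∈ tK[[t]]`); and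
 * given such `E₁`, the right-hand side
   `-E₁·q'/q - 3F^σ·τ^{(σ)}·p⁻¹(t^σ)'/(t^σ-1)` of the second equation has no `dt/t`
   residue at `t = 0` (i.e. after clearing `q` it is again a power series `g`), so there
   is a unique power series `E₂` with `E₂' = g` and the prescribed constant term
   `E₂(0) = κ` (`κ = -9·ln₂^{(p)}(-ν)`, `ν = (-1+√-3)/2`).
-/

open PowerSeries

/-- `F = (1/(2s))·₂F₁(1/3, 2/3; 1; t)` where `s = √-3`. -/
noncomputable def hypFs (K : Type*) [Field K] [CharZero K] (s : K) : PowerSeries K :=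
  PowerSeries.mk fun n =>
    (2 * s)⁻¹ * ((ascPochhammer K n).eval (3⁻¹) * (ascPochhammer K n).eval (2 / 3)) /
      ((n.factorial : K) * (n.factorial : K))


private lemma antideriv_existsUnique {K : Type*} [Field K] [CharZero K]
    (f : PowerSeries K) (a : K) :
    ∃! E : PowerSeries K, derivative K E = f ∧ constantCoeff E = a := by
  refine ⟨PowerSeries.mk fun n => if n = 0 then a else coeff (n - 1) f / n, ⟨?_, ?_⟩, ?_⟩
  · ext n
    rw [coeff_derivative, coeff_mk]
    have h : ((n : K) + 1) ≠ 0 := by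
      exact_mod_cast (Nat.cast_ne_zero (R := K)).2 (Nat.succ_ne_zero n)
    simp only [Nat.succ_ne_zero, if_false, Nat.add_sub_cancel]
    push_cast
    field_simp
  · simp [← coeff_zero_eq_constantCoeff, coeff_mk]
  · rintro E ⟨hd, hcc⟩
    apply derivative.ext
    · rw [hd]
      ext n
      rw [coeff_derivative, coeff_mk]
      have h : ((n : K) + 1) ≠ 0 := by
        exact_mod_cast (Nat.cast_ne_zero (R := K)).2 (Nat.succ_ne_zero n)
      simp only [Nat.succ_ne_zero, if_false, Nat.add_sub_cancel]
      push_cast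
      field_simp
    · simp [hcc, ← coeff_zero_eq_constantCoeff, coeff_mk]

theorem E1_E2_well_defined
    (p : ℕ) (hp : p.Prime)
    (K : Type*) [Field K] [CharZero K]
    (s : K) (hs : s * s = -3)
    (c : K) (hc : c ≠ 0)
    -- the Frobenius `σ` with `σ(t) = c·t^p`:
    (S : PowerSeries K →+* PowerSeries K)
    (hSX : S X = C c * X ^ p) (hSC : ∀ a : K, S (C a) = C a)
    -- the Tate period `q = t·u`, `u(0) = 1/27`:
    (u : PowerSeries K) (hu : constantCoeff u = (27 : K)⁻¹)
    (q : PowerSeries K) (hq : q = X * u)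
    -- `τ^{(σ)} = p⁻¹ log(q^p/q^σ)` and the constant `κ = -9·ln₂^{(p)}(-ν)`:
    (τ : PowerSeries K) (κ : K) :
    -- the first equation has a unique power-series solution with `E₁(0) = 0` …
    (∃! E₁ : PowerSeries K,
      derivative K E₁ =
        -(3 : PowerSeries K) * (hypFs K s * (X - 1)⁻¹ -
          S (hypFs K s) * (C (p : K)⁻¹ * derivative K (C c * X ^ p)) *
            (C c * X ^ p - 1)⁻¹) ∧
      constantCoeff E₁ = 0) ∧
    -- … and for any such `E₁` (automatically `E₁ ∈ tK[[t]]`), the right-hand side of the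
    -- second equation has no `dt/t` residue at `t = 0`, so `E₂` is determined in `K[[t]]`
    -- by the prescribed constant term:
    (∀ E₁ : PowerSeries K,
      derivative K E₁ =
        -(3 : PowerSeries K) * (hypFs K s * (X - 1)⁻¹ -
          S (hypFs K s) * (C (p : K)⁻¹ * derivative K (C c * X ^ p)) *
            (C c * X ^ p - 1)⁻¹) →
      constantCoeff E₁ = 0 →
      ∃ g : PowerSeries K,
        q * g = -(E₁ * derivative K q) -
          q * ((3 : PowerSeries K) * S (hypFs K s) * τ *
            (C (p : K)⁻¹ * derivative K (C c * X ^ p)) * (C c * X ^ p - 1)⁻¹) ∧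
        ∃! E₂ : PowerSeries K, derivative K E₂ = g ∧ constantCoeff E₂ = κ) := by
  
  constructor
  · exact antideriv_existsUnique _ 0
  · intro E₁ _ hE₁0
    set R : PowerSeries K := -(E₁ * derivative K q) -
        q * ((3 : PowerSeries K) * S (hypFs K s) * τ *
          (C (p : K)⁻¹ * derivative K (C c * X ^ p)) * (C c * X ^ p - 1)⁻¹) with hR
    have hXE : (X : PowerSeries K) ∣ E₁ := X_dvd_iff.2 hE₁0
    have hXq : (X : PowerSeries K) ∣ q := ⟨u, hq⟩
    have hXR : (X : PowerSeries K) ∣ R := by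
      apply dvd_sub
      · exact dvd_neg.2 (hXE.mul_right _)
      · exact hXq.mul_right _
    obtain ⟨h, hh⟩ := hXR
    have hu0 : constantCoeff u ≠ 0 := by
      rw [hu]
      exact inv_ne_zero (by norm_num)
    refine ⟨u⁻¹ * h, ?_, antideriv_existsUnique _ κ⟩
    rw [hh, hq]
    calc X * u * (u⁻¹ * h) = X * ((u * u⁻¹) * h) := by ring
    _ = X * h := by rw [PowerSeries.mul_inv_cancel u hu0, one_mul]
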